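/- Let G be a connected graph with minimum degree at least d, and let u, v, v' be vertices with dist(v,v') ≥ 3 and dist(u,v) = dist(u,v') = 3. Then the degree of u in G^4 is at least 3d. -/

import Mathlib

/-- The `k`-th power of a simple graph `G`: two distinct vertices are adjacent
iff their distance in `G` is at most `k`. -/
def SimpleGraph.power {V : Type*} (G : SimpleGraph V) (k : ℕ) : SimpleGraph V where
  Adj u v := u ≠ v ∧ G.dist u v ≤ k
  symm := ⟨fun u v h => ⟨h.1.symm, by rw [SimpleGraph.dist_comm]; exact h.2⟩⟩
  loopless := ⟨fun v h => h.1 rfl⟩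

theorem degree_fourth_power_ge_three_d {V : Type*} [Fintype V] (G : SimpleGraph V) (d : ℕ)
    (hconn : G.Connected) (hmin : ∀ w : V, d ≤ (G.neighborSet w).ncard)
    (u v v' : V) (hvv' : 3 ≤ G.dist v v') (huv : G.dist u v = 3) (huv' : G.dist u v' = 3) :
    3 * d ≤ ((G.power 4).neighborSet u).ncard := by
  classical
  have tri : ∀ a b c : V, G.dist a c ≤ G.dist a b + G.dist b c := fun a b c =>
    hconn.dist_triangle
  have adj_dist : ∀ {a b : V}, G.Adj a b → G.dist a b = 1 := fun h =>
    SimpleGraph.dist_eq_one_iff_adj.mpr h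
  have dc : ∀ a b : V, G.dist a b = G.dist b a := fun a b => SimpleGraph.dist_comm ..
  have hsub : G.neighborSet u ∪ G.neighborSet v ∪ G.neighborSet v' ⊆
      (G.power 4).neighborSet u := by
    rintro w (⟨h | h⟩ | h)
    · exact ⟨G.ne_of_adj h, by rw [adj_dist h]; omega⟩
    · have e1 : G.dist v w = 1 := adj_dist h
      have t1 := tri u v w
      have t2 := tri u w v
      refine ⟨fun hq => ?_, by omega⟩
      subst hq; rw [dc v u] at e1; omega
    · have e1 : G.dist v' w = 1 := adj_dist h
      have t1 := tri u v' w
      have t2 := tri u w v'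
      refine ⟨fun hq => ?_, by omega⟩
      subst hq; rw [dc v' u] at e1; omega
  have d12 : Disjoint (G.neighborSet u) (G.neighborSet v) := by
    rw [Set.disjoint_left]
    rintro w h1 h2
    have e1 : G.dist u w = 1 := adj_dist h1
    have e2 : G.dist v w = 1 := adj_dist h2
    have := tri u w v
    rw [dc w v] at this; omega
  have d13 : Disjoint (G.neighborSet u) (G.neighborSet v') := by
    rw [Set.disjoint_left]
    rintro w h1 h2
    have e1 : G.dist u w = 1 := adj_dist h1
    have e2 : G.dist v' w = 1 := adj_dist h2
    have := tri u w v'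
    rw [dc w v'] at this; omega
  have d23 : Disjoint (G.neighborSet v) (G.neighborSet v') := by
    rw [Set.disjoint_left]
    rintro w h1 h2
    have e1 : G.dist v w = 1 := adj_dist h1
    have e2 : G.dist v' w = 1 := adj_dist h2
    have := tri v w v'
    rw [dc w v'] at this; omega
  have hfin : ∀ s : Set V, s.Finite := fun s => s.toFinite
  have hcard : (G.neighborSet u ∪ G.neighborSet v ∪ G.neighborSet v').ncard =
      (G.neighborSet u).ncard + (G.neighborSet v).ncard + (G.neighborSet v').ncard := by
    rw [Set.ncard_union_eq (Set.disjoint_union_left.mpr ⟨d13, d23⟩) (hfin _) (hfin _),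
      Set.ncard_union_eq d12 (hfin _) (hfin _)]
  have hle := Set.ncard_le_ncard hsub (hfin _)
  have := hmin u; have := hmin v; have := hmin v'
  omega
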